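/- arXiv:2302.01364 — 2 statements merged into one kernel-verified Lean document; each statement's English description precedes it below -/
import Mathlib

section
/- There exist constants 0 < c₁ ≤ c₂ < ∞ such that c₁ ≤ R(y) ≤ c₂ for all y ≥ 0; that is, the function R is uniformly strictly positive and bounded on [0,∞). -/
open Matrix NormedSpace
open scoped Nat

/-- The `m×m` matrix with diagonal entries `-a i`, subdiagonal entries `g i`, zero elsewhere. -/
def igoA (m : ℕ) (a : Fin m → ℝ) (g : Fin (m - 1) → ℝ) : Matrix (Fin m) (Fin m) ℝ :=
  fun i j =>
    if i = j then -a i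
    else if h : (i : ℕ) = (j : ℕ) + 1 then g ⟨(j : ℕ), by have := i.isLt; omega⟩
    else 0

/-- The first standard basis vector `e₁` of `ℝ^m`. -/
def igoB (m : ℕ) : Fin m → ℝ := fun i => if (i : ℕ) = 0 then 1 else 0

/-- The last standard basis vector `e_m` of `ℝ^m` (acting as the row `C = e_mᵀ`). -/
def igoC (m : ℕ) : Fin m → ℝ := fun i => if (i : ℕ) = m - 1 then 1 else 0

/-- The function `R(y) = F(y) · C (exp(−Φ(y)A) − I)⁻¹ B` of the equation of periods. -/
noncomputable def igoR (m : ℕ) (a : Fin m → ℝ) (g : Fin (m - 1) → ℝ)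
    (Φ F : ℝ → ℝ) (y : ℝ) : ℝ :=
  F y * (igoC m ⬝ᵥ ((exp (-(Φ y) • igoA m a g) - 1)⁻¹ :
    Matrix (Fin m) (Fin m) ℝ).mulVec (igoB m))

namespace IgoAux

variable {m : ℕ}

/-! ### Entrywise positivity and monotonicity -/

theorem mul_nonneg' {P Q : Matrix (Fin m) (Fin m) ℝ} (hP : ∀ i j, 0 ≤ P i j)
    (hQ : ∀ i j, 0 ≤ Q i j) : ∀ i j, 0 ≤ (P * Q) i j := fun i j => by
  rw [Matrix.mul_apply]
  exact Finset.sum_nonneg fun l _ => mul_nonneg (hP i l) (hQ l j)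

theorem pow_nonneg' {P : Matrix (Fin m) (Fin m) ℝ} (hP : ∀ i j, 0 ≤ P i j) :
    ∀ (n : ℕ) (i j : Fin m), 0 ≤ (P ^ n) i j := by
  intro n
  induction n with
  | zero => intro i j; rw [pow_zero, Matrix.one_apply]; split <;> norm_num
  | succ n ih =>
    rw [pow_succ]
    exact mul_nonneg' ih hP

theorem mul_le' {P P' Q Q' : Matrix (Fin m) (Fin m) ℝ}
    (hP : ∀ i j, 0 ≤ P i j) (hQ : ∀ i j, 0 ≤ Q i j)
    (hPP : ∀ i j, P i j ≤ P' i j) (hQQ : ∀ i j, Q i j ≤ Q' i j) :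
    ∀ i j, (P * Q) i j ≤ (P' * Q') i j := fun i j => by
  rw [Matrix.mul_apply, Matrix.mul_apply]
  refine Finset.sum_le_sum fun l _ => ?_
  exact mul_le_mul (hPP i l) (hQQ l j) (hQ l j) ((hP i l).trans (hPP i l))

theorem pow_le' {P Q : Matrix (Fin m) (Fin m) ℝ}
    (hP : ∀ i j, 0 ≤ P i j) (hPQ : ∀ i j, P i j ≤ Q i j) :
    ∀ (n : ℕ) (i j : Fin m), (P ^ n) i j ≤ (Q ^ n) i j := by
  intro n
  induction n with
  | zero => intro i j; rw [pow_zero, pow_zero]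
  | succ n ih =>
    rw [pow_succ, pow_succ]
    exact mul_le' (pow_nonneg' hP n) hP ih hPQ

/-! ### The exponential, entrywise -/

theorem expSummable (P : Matrix (Fin m) (Fin m) ℝ) :
    Summable (fun n : ℕ => ((n ! : ℝ)⁻¹) • P ^ n) := by
  letI : SeminormedRing (Matrix (Fin m) (Fin m) ℝ) := Matrix.linftyOpSemiNormedRing
  letI : NormedRing (Matrix (Fin m) (Fin m) ℝ) := Matrix.linftyOpNormedRing
  letI : NormedAlgebra ℝ (Matrix (Fin m) (Fin m) ℝ) := Matrix.linftyOpNormedAlgebra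
  exact expSeries_summable' (𝕂 := ℝ) P

theorem expRowSummable (P : Matrix (Fin m) (Fin m) ℝ) (i : Fin m) :
    Summable (fun n : ℕ => (((n ! : ℝ)⁻¹) • P ^ n) i) :=
  Pi.summable.mp (expSummable P) i

theorem expEntrySummable (P : Matrix (Fin m) (Fin m) ℝ) (i j : Fin m) :
    Summable (fun n : ℕ => ((n ! : ℝ)⁻¹) * (P ^ n) i j) := by
  simpa [Matrix.smul_apply, smul_eq_mul] using Pi.summable.mp (expRowSummable P i) j

theorem exp_apply (P : Matrix (Fin m) (Fin m) ℝ) (i j : Fin m) :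
    exp P i j = ∑' n : ℕ, ((n ! : ℝ)⁻¹) * (P ^ n) i j := by
  have he : exp P = ∑' n : ℕ, ((n ! : ℝ)⁻¹) • P ^ n := by rw [exp_eq_tsum (𝕂 := ℝ)]
  rw [he]
  rw [show (∑' n : ℕ, ((n ! : ℝ)⁻¹) • P ^ n) i = ∑' n : ℕ, (((n ! : ℝ)⁻¹) • P ^ n) i from
    tsum_apply (expSummable P)]
  rw [show (∑' n : ℕ, (((n ! : ℝ)⁻¹) • P ^ n) i) j = ∑' n : ℕ, (((n ! : ℝ)⁻¹) • P ^ n) i j from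
    tsum_apply (expRowSummable P i)]
  simp [Matrix.smul_apply]

theorem exp_entry_nonneg {P : Matrix (Fin m) (Fin m) ℝ} (hP : ∀ i j, 0 ≤ P i j) (i j : Fin m) :
    0 ≤ exp P i j := by
  rw [exp_apply]
  exact tsum_nonneg fun n => mul_nonneg (by positivity) (pow_nonneg' hP n i j)

theorem exp_entry_ge {P : Matrix (Fin m) (Fin m) ℝ} (hP : ∀ i j, 0 ≤ P i j)
    (k : ℕ) (i j : Fin m) : ((k ! : ℝ)⁻¹) * (P ^ k) i j ≤ exp P i j := by
  rw [exp_apply]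
  exact Summable.le_tsum (expEntrySummable P i j) k
    (fun n _ => mul_nonneg (by positivity) (pow_nonneg' hP n i j))

theorem exp_entry_le_exp_entry {P Q : Matrix (Fin m) (Fin m) ℝ}
    (hP : ∀ i j, 0 ≤ P i j) (hPQ : ∀ i j, P i j ≤ Q i j) (i j : Fin m) :
    exp P i j ≤ exp Q i j := by
  rw [exp_apply, exp_apply]
  refine Summable.tsum_le_tsum (fun n => ?_) (expEntrySummable P i j) (expEntrySummable Q i j)
  exact mul_le_mul_of_nonneg_left (pow_le' hP hPQ n i j) (by positivity)

/-- `exp (P + r • 1) = e^r • exp P`. -/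
theorem exp_add_smul_one (P : Matrix (Fin m) (Fin m) ℝ) (r : ℝ) :
    exp (P + r • (1 : Matrix (Fin m) (Fin m) ℝ)) = Real.exp r • exp P := by
  have hc : Commute P (r • (1 : Matrix (Fin m) (Fin m) ℝ)) :=
    (Commute.one_right P).smul_right r
  rw [Matrix.exp_add_of_commute P (r • 1) hc]
  have h1 : exp (r • (1 : Matrix (Fin m) (Fin m) ℝ)) = Real.exp r • 1 := by
    letI : SeminormedRing (Matrix (Fin m) (Fin m) ℝ) := Matrix.linftyOpSemiNormedRing
    letI : NormedRing (Matrix (Fin m) (Fin m) ℝ) := Matrix.linftyOpNormedRing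
    letI : NormedAlgebra ℝ (Matrix (Fin m) (Fin m) ℝ) := Matrix.linftyOpNormedAlgebra
    have : r • (1 : Matrix (Fin m) (Fin m) ℝ) = algebraMap ℝ _ r :=
      (Algebra.algebraMap_eq_smul_one r).symm
    rw [this]
    erw [← algebraMap_exp_comm (𝕂 := ℝ)]
    rw [Real.exp_eq_exp_ℝ, Algebra.algebraMap_eq_smul_one]
  rw [h1, mul_smul_comm, mul_one]

/-! ### The strictly lower part `G` -/

theorem G_nonneg (g : Fin (m - 1) → ℝ) (hg : ∀ i, 0 ≤ g i) :
    ∀ i j, 0 ≤ igoA m (fun _ => (0 : ℝ)) g i j := by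
  intro i j
  unfold igoA
  split_ifs with h1 h2
  · norm_num
  · exact hg _
  · exact le_rfl

theorem G_eq_zero_of_ne (g : Fin (m - 1) → ℝ) {i j : Fin m} (h : (i : ℕ) ≠ (j : ℕ) + 1) :
    igoA m (fun _ => (0 : ℝ)) g i j = 0 := by
  rcases eq_or_ne i j with e | e
  · subst e; simp [igoA]
  · simp [igoA, e, h]

theorem Gpow_eq_zero (g : Fin (m - 1) → ℝ) :
    ∀ (n : ℕ) (i j : Fin m), (i : ℕ) < (j : ℕ) + n →
      ((igoA m (fun _ => (0 : ℝ)) g) ^ n) i j = 0 := by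
  intro n
  induction n with
  | zero =>
    intro i j h
    rw [pow_zero]
    exact Matrix.one_apply_ne (fun e => by subst e; omega)
  | succ n ih =>
    intro i j h
    rw [pow_succ, Matrix.mul_apply]
    refine Finset.sum_eq_zero fun l _ => ?_
    by_cases hl : (l : ℕ) = (j : ℕ) + 1
    · rw [ih i l (by omega), zero_mul]
    · rw [G_eq_zero_of_ne g hl, mul_zero]

theorem G_colsum_le (g : Fin (m - 1) → ℝ) (hg : ∀ i, 0 ≤ g i) (K : ℝ) (hK1 : 1 ≤ K)
    (hgK : ∀ i, g i ≤ K) (j : Fin m) :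
    (∑ l, igoA m (fun _ => (0 : ℝ)) g l j) ≤ K := by
  by_cases h : (j : ℕ) + 1 < m
  · rw [Finset.sum_eq_single (⟨(j : ℕ) + 1, h⟩ : Fin m)]
    · unfold igoA
      split_ifs with h1 h2
      · exact absurd (congrArg Fin.val h1) (by simp)
      · exact hgK _
      · simp at h2
    · intro b _ hb
      refine G_eq_zero_of_ne g fun hb' => hb ?_
      exact Fin.ext hb'
    · intro hmem; exact absurd (Finset.mem_univ _) hmem
  · rw [Finset.sum_eq_zero fun l _ => G_eq_zero_of_ne g (fun hl => by have := l.isLt; omega)]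
    linarith

theorem Gpow_le (g : Fin (m - 1) → ℝ) (hg : ∀ i, 0 ≤ g i) (K : ℝ) (hK1 : 1 ≤ K)
    (hgK : ∀ i, g i ≤ K) :
    ∀ (n : ℕ) (i j : Fin m), ((igoA m (fun _ => (0 : ℝ)) g) ^ n) i j ≤ K ^ n := by
  intro n
  induction n with
  | zero =>
    intro i j
    rw [pow_zero, Matrix.one_apply]
    split <;> norm_num
  | succ n ih =>
    intro i j
    rw [pow_succ, Matrix.mul_apply]
    calc (∑ l, ((igoA m (fun _ => (0:ℝ)) g) ^ n) i l * igoA m (fun _ => (0:ℝ)) g l j)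
        ≤ ∑ l, K ^ n * igoA m (fun _ => (0:ℝ)) g l j := by
          refine Finset.sum_le_sum fun l _ => ?_
          exact mul_le_mul_of_nonneg_right (ih i l) (G_nonneg g hg l j)
      _ = K ^ n * ∑ l, igoA m (fun _ => (0:ℝ)) g l j := by rw [Finset.mul_sum]
      _ ≤ K ^ n * K := by
          refine mul_le_mul_of_nonneg_left (G_colsum_le g hg K hK1 hgK j) ?_
          positivity
      _ = K ^ (n + 1) := by ring

theorem exp_tG_entry_le (g : Fin (m - 1) → ℝ) (hg : ∀ i, 0 ≤ g i) (K : ℝ) (hK1 : 1 ≤ K)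
    (hgK : ∀ i, g i ≤ K) (t : ℝ) (ht : 0 ≤ t) (i j : Fin m) :
    exp (t • igoA m (fun _ => (0 : ℝ)) g) i j ≤ (m : ℝ) * (1 + t * K) ^ m := by
  rw [exp_apply]
  have hzero : ∀ n ∉ Finset.range m, ((n ! : ℝ)⁻¹) * ((t • igoA m (fun _ => (0:ℝ)) g) ^ n) i j = 0 := by
    intro n hn
    rw [Finset.mem_range, not_lt] at hn
    rw [smul_pow, Matrix.smul_apply, Gpow_eq_zero g n i j (by have := i.isLt; omega)]
    simp
  rw [tsum_eq_sum hzero]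
  have hbound : ∀ n ∈ Finset.range m,
      ((n ! : ℝ)⁻¹) * ((t • igoA m (fun _ => (0:ℝ)) g) ^ n) i j ≤ (1 + t * K) ^ m := by
    intro n hn
    rw [Finset.mem_range] at hn
    rw [smul_pow, Matrix.smul_apply, smul_eq_mul]
    have h1 : ((n ! : ℝ)⁻¹) ≤ 1 := by
      rw [inv_le_one_iff₀]
      right
      exact_mod_cast Nat.one_le_iff_ne_zero.mpr (Nat.factorial_ne_zero n)
    have h2 : t ^ n * ((igoA m (fun _ => (0:ℝ)) g) ^ n) i j ≤ (1 + t * K) ^ m := by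
      calc t ^ n * ((igoA m (fun _ => (0:ℝ)) g) ^ n) i j
          ≤ t ^ n * K ^ n := by
            refine mul_le_mul_of_nonneg_left (Gpow_le g hg K hK1 hgK n i j) (by positivity)
        _ = (t * K) ^ n := by rw [mul_pow]
        _ ≤ (1 + t * K) ^ n := by
            refine pow_le_pow_left₀ (by positivity) (by linarith) n
        _ ≤ (1 + t * K) ^ m := by
            refine pow_le_pow_right₀ (by nlinarith) hn.le
    calc ((n ! : ℝ)⁻¹) * (t ^ n * ((igoA m (fun _ => (0:ℝ)) g) ^ n) i j)
        ≤ 1 * (t ^ n * ((igoA m (fun _ => (0:ℝ)) g) ^ n) i j) := by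
          refine mul_le_mul_of_nonneg_right h1 ?_
          have := pow_nonneg' (G_nonneg g hg) n i j
          positivity
      _ = t ^ n * ((igoA m (fun _ => (0:ℝ)) g) ^ n) i j := one_mul _
      _ ≤ (1 + t * K) ^ m := h2
  calc (∑ n ∈ Finset.range m, ((n ! : ℝ)⁻¹) * ((t • igoA m (fun _ => (0:ℝ)) g) ^ n) i j)
      ≤ ∑ _n ∈ Finset.range m, (1 + t * K) ^ m := Finset.sum_le_sum hbound
    _ = (m : ℝ) * (1 + t * K) ^ m := by
        rw [Finset.sum_const, Finset.card_range, nsmul_eq_mul]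

/-! ### Path positivity -/

theorem pow_path_pos (P : Matrix (Fin m) (Fin m) ℝ) (hP : ∀ i j, 0 ≤ P i j)
    (hsub : ∀ (j : ℕ) (h : j + 1 < m), 0 < P ⟨j + 1, h⟩ ⟨j, by omega⟩) :
    ∀ (n j : ℕ) (h : j + n < m), 0 < (P ^ n) ⟨j + n, h⟩ ⟨j, by omega⟩ := by
  intro n
  induction n with
  | zero =>
    intro j h
    rw [pow_zero]
    simp [Matrix.one_apply]
  | succ n ih =>
    intro j h
    rw [pow_succ', Matrix.mul_apply]
    refine Finset.sum_pos' (fun l _ => mul_nonneg (hP _ _) (pow_nonneg' hP n _ _)) ?_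
    refine ⟨⟨j + n, by omega⟩, Finset.mem_univ _, ?_⟩
    have h1 : 0 < P ⟨j + n + 1, by omega⟩ ⟨j + n, by omega⟩ := hsub (j + n) (by omega)
    have h2 : 0 < (P ^ n) ⟨j + n, by omega⟩ ⟨j, by omega⟩ := ih j (by omega)
    have he : (⟨j + (n + 1), h⟩ : Fin m) = ⟨j + n + 1, by omega⟩ := by
      ext; simp; omega
    rw [he]
    exact mul_pos h1 h2

/-! ### Entry lemmas for `igoA` -/

theorem igoA_diag (a : Fin m → ℝ) (g : Fin (m - 1) → ℝ) (i : Fin m) :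
    igoA m a g i i = -a i := by
  unfold igoA; rw [if_pos rfl]

theorem igoA_succ (a : Fin m → ℝ) (g : Fin (m - 1) → ℝ) {i j : Fin m}
    (h : (i : ℕ) = (j : ℕ) + 1) :
    ∃ l : Fin (m - 1), (l : ℕ) = (j : ℕ) ∧ igoA m a g i j = g l := by
  have hne : i ≠ j := fun e => by rw [e] at h; omega
  refine ⟨⟨(j : ℕ), by have := i.isLt; omega⟩, rfl, ?_⟩
  unfold igoA
  rw [if_neg hne, dif_pos h]

theorem igoA_zero (a : Fin m → ℝ) (g : Fin (m - 1) → ℝ) {i j : Fin m}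
    (h1 : i ≠ j) (h2 : (i : ℕ) ≠ (j : ℕ) + 1) :
    igoA m a g i j = 0 := by
  unfold igoA; rw [if_neg h1, dif_neg h2]

/-! ### Evaluation of the bilinear form -/

theorem dot_eval (hm : 1 ≤ m) (T : Matrix (Fin m) (Fin m) ℝ) :
    igoC m ⬝ᵥ T.mulVec (igoB m) = T ⟨m - 1, by omega⟩ ⟨0, by omega⟩ := by
  have h1 : ∀ i, T.mulVec (igoB m) i = T i ⟨0, by omega⟩ := by
    intro i
    rw [Matrix.mulVec, dotProduct, Finset.sum_eq_single (⟨0, by omega⟩ : Fin m)]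
    · simp [igoB]
    · intro b _ hb
      have hb0 : (b : ℕ) ≠ 0 := fun hh => hb (Fin.ext hh)
      simp [igoB, hb0]
    · intro hmem; exact absurd (Finset.mem_univ _) hmem
  rw [dotProduct, Finset.sum_eq_single (⟨m - 1, by omega⟩ : Fin m)]
  · simp [igoC, h1]
  · intro b _ hb
    have hb0 : (b : ℕ) ≠ m - 1 := fun hh => hb (Fin.ext hh)
    simp [igoC, hb0]
  · intro hmem; exact absurd (Finset.mem_univ _) hmem

/-- The scalar function `ξ ↦ C (exp(−ξ A) − I)⁻¹ B`. -/
noncomputable def igoφ (m : ℕ) (a : Fin m → ℝ) (g : Fin (m - 1) → ℝ) (ξ : ℝ) : ℝ :=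
  igoC m ⬝ᵥ ((exp (-ξ • igoA m a g) - 1)⁻¹ :
    Matrix (Fin m) (Fin m) ℝ).mulVec (igoB m)

/-! ### The key lemma -/

set_option maxHeartbeats 1000000 in
theorem key (hm : 1 ≤ m) (a : Fin m → ℝ) (g : Fin (m - 1) → ℝ)
    (ha : ∀ i, 0 < a i) (hg : ∀ i, 0 < g i) (ξ : ℝ) (hξ : 0 < ξ) :
    IsUnit (exp (-ξ • igoA m a g) - 1).det ∧ 0 < IgoAux.igoφ m a g ξ := by
  have hmpos : 0 < m := hm
  haveI : Nonempty (Fin m) := ⟨⟨0, hmpos⟩⟩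
  set A := igoA m a g with hA
  set G := igoA m (fun _ => (0 : ℝ)) g with hG
  set α := Finset.univ.inf' Finset.univ_nonempty a with hα
  set c := Finset.univ.sup' Finset.univ_nonempty a with hc
  have hαle : ∀ i, α ≤ a i := fun i => Finset.inf'_le a (Finset.mem_univ i)
  have hce : ∀ i, a i ≤ c := fun i => Finset.le_sup' a (Finset.mem_univ i)
  have hαpos : 0 < α := by
    rw [hα, Finset.lt_inf'_iff]
    exact fun i _ => ha i
  have hαc : α ≤ c := le_trans (hαle ⟨0, hmpos⟩) (hce ⟨0, hmpos⟩)
  set Aα := igoA m (fun _ => α) g with hAα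
  set N := ξ • A + (ξ * c) • (1 : Matrix (Fin m) (Fin m) ℝ) with hN
  set Nα := ξ • Aα + (ξ * c) • (1 : Matrix (Fin m) (Fin m) ℝ) with hNα
  set E := exp (ξ • A) with hE
  set Eα := exp (ξ • Aα) with hEα
  have genApply : ∀ (u v : ℝ) (P : Matrix (Fin m) (Fin m) ℝ) (i j : Fin m),
      (u • P + v • (1 : Matrix (Fin m) (Fin m) ℝ)) i j
        = u * P i j + (if i = j then v else 0) := by
    intro u v P i j
    by_cases e : i = j <;>
      simp [Matrix.add_apply, Matrix.smul_apply, Matrix.one_apply, e]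
  have hshift : ∀ (P : Matrix (Fin m) (Fin m) ℝ),
      exp (ξ • P) = Real.exp (-(ξ * c)) •
        exp (ξ • P + (ξ * c) • (1 : Matrix (Fin m) (Fin m) ℝ)) := by
    intro P
    rw [← exp_add_smul_one (ξ • P + (ξ * c) • 1) (-(ξ * c))]
    congr 1
    rw [add_assoc, ← add_smul]
    simp
  have hEN : E = Real.exp (-(ξ * c)) • exp N := hshift A
  have hEαN : Eα = Real.exp (-(ξ * c)) • exp Nα := hshift Aα
  -- entries of N and Nα
  have hNnn : ∀ i j, 0 ≤ N i j := by
    intro i j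
    rw [hN, genApply, hA]
    by_cases e : i = j
    · subst e
      rw [if_pos rfl, igoA_diag]
      have := hce i
      nlinarith
    · rw [if_neg e]
      by_cases h2 : (i : ℕ) = (j : ℕ) + 1
      · obtain ⟨l, _, hv⟩ := igoA_succ a g h2
        rw [hv]
        have := (hg l).le
        nlinarith
      · rw [igoA_zero a g e h2]
        norm_num
  have hNαnn : ∀ i j, 0 ≤ Nα i j := by
    intro i j
    rw [hNα, genApply, hAα]
    by_cases e : i = j
    · subst e
      rw [if_pos rfl, igoA_diag]
      nlinarith
    · rw [if_neg e]
      by_cases h2 : (i : ℕ) = (j : ℕ) + 1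
      · obtain ⟨l, _, hv⟩ := igoA_succ (fun _ => α) g h2
        rw [hv]
        have := (hg l).le
        nlinarith
      · rw [igoA_zero (fun _ => α) g e h2]
        norm_num
  have hNle : ∀ i j, N i j ≤ Nα i j := by
    intro i j
    rw [hN, hNα, genApply, genApply, hA, hAα]
    by_cases e : i = j
    · subst e
      rw [igoA_diag, igoA_diag]
      have := hαle i
      nlinarith
    · by_cases h2 : (i : ℕ) = (j : ℕ) + 1
      · obtain ⟨l1, hl1, hv1⟩ := igoA_succ a g h2
        obtain ⟨l2, hl2, hv2⟩ := igoA_succ (fun _ => α) g h2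
        have : l1 = l2 := Fin.ext (by omega)
        rw [hv1, hv2, this]
      · rw [igoA_zero a g e h2, igoA_zero (fun _ => α) g e h2]
  -- entries of E and Eα
  have hEnn : ∀ i j, 0 ≤ E i j := by
    intro i j
    rw [hEN, Matrix.smul_apply, smul_eq_mul]
    exact mul_nonneg (Real.exp_nonneg _) (exp_entry_nonneg hNnn i j)
  have hEle : ∀ i j, E i j ≤ Eα i j := by
    intro i j
    rw [hEN, hEαN, Matrix.smul_apply, Matrix.smul_apply, smul_eq_mul, smul_eq_mul]
    exact mul_le_mul_of_nonneg_left (exp_entry_le_exp_entry hNnn hNle i j) (Real.exp_nonneg _)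
  -- positivity of the corner entry of E
  have hNsub : ∀ (j : ℕ) (h : j + 1 < m), 0 < N ⟨j + 1, h⟩ ⟨j, by omega⟩ := by
    intro j h
    have hne : (⟨j + 1, h⟩ : Fin m) ≠ ⟨j, by omega⟩ := by
      intro e
      have := congrArg Fin.val e
      simp at this
    have hsucc : ((⟨j + 1, h⟩ : Fin m) : ℕ) = ((⟨j, by omega⟩ : Fin m) : ℕ) + 1 := rfl
    obtain ⟨l, _, hv⟩ := igoA_succ a g hsucc
    rw [hN, genApply, hA, hv, if_neg hne]
    have := hg l
    nlinarith
  have hNpath : 0 < (N ^ (m - 1)) ⟨m - 1, by omega⟩ ⟨0, by omega⟩ := by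
    have h0 : (0 : ℕ) + (m - 1) < m := by omega
    have hp := pow_path_pos N hNnn hNsub (m - 1) 0 h0
    have he : (⟨0 + (m - 1), h0⟩ : Fin m) = ⟨m - 1, by omega⟩ := by ext; simp
    rwa [he] at hp
  have hEcorner : 0 < E ⟨m - 1, by omega⟩ ⟨0, by omega⟩ := by
    rw [hEN, Matrix.smul_apply, smul_eq_mul]
    refine mul_pos (Real.exp_pos _) ?_
    refine lt_of_lt_of_le ?_ (exp_entry_ge hNnn (m - 1) _ _)
    have hfac : (0:ℝ) < (((m-1)! : ℝ))⁻¹ := by positivity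
    nlinarith
  -- the bound constant
  set K := 1 + ∑ i, g i with hK
  have hgsum : (0:ℝ) ≤ ∑ i, g i := Finset.sum_nonneg fun i _ => (hg i).le
  have hK1 : 1 ≤ K := by rw [hK]; linarith
  have hgK : ∀ i, g i ≤ K := by
    intro i
    have h1 : g i ≤ ∑ i, g i := Finset.single_le_sum (fun i _ => (hg i).le) (Finset.mem_univ i)
    rw [hK]; linarith
  -- splitting of Aα
  have hAαsplit : ∀ t : ℝ, t • Aα = t • G + (-(t * α)) • (1 : Matrix (Fin m) (Fin m) ℝ) := by
    intro t
    ext i j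
    rw [genApply, Matrix.smul_apply, smul_eq_mul, hAα, hG]
    by_cases e : i = j
    · subst e
      rw [if_pos rfl, igoA_diag, igoA_diag]
      ring
    · rw [if_neg e]
      by_cases h2 : (i : ℕ) = (j : ℕ) + 1
      · obtain ⟨l1, hl1, hv1⟩ := igoA_succ (fun _ => α) g h2
        obtain ⟨l2, hl2, hv2⟩ := igoA_succ (fun _ => (0:ℝ)) g h2
        have hll : l1 = l2 := Fin.ext (by omega)
        rw [hv1, hv2, hll]
        ring
      · rw [igoA_zero (fun _ => α) g e h2, igoA_zero (fun _ => (0:ℝ)) g e h2]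
        ring
  have hEαpow : ∀ k : ℕ, ∀ i j, (Eα ^ k) i j ≤
      Real.exp (-((k : ℝ) * ξ * α)) * ((m : ℝ) * (1 + (k : ℝ) * ξ * K) ^ m) := by
    intro k i j
    have h1 : Eα ^ k = exp (k • (ξ • Aα)) := (Matrix.exp_nsmul k (ξ • Aα)).symm
    have h2 : k • (ξ • Aα) = ((k : ℝ) * ξ) • Aα := by
      rw [← Nat.cast_smul_eq_nsmul ℝ, smul_smul]
    have h3 : Eα ^ k = Real.exp (-((k : ℝ) * ξ * α)) • exp (((k : ℝ) * ξ) • G) := by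
      rw [h1, h2, hAαsplit ((k : ℝ) * ξ), exp_add_smul_one]
    rw [h3, Matrix.smul_apply, smul_eq_mul]
    refine mul_le_mul_of_nonneg_left ?_ (Real.exp_nonneg _)
    have hb := exp_tG_entry_le g (fun i => (hg i).le) K hK1 hgK ((k : ℝ) * ξ)
      (by positivity) i j
    rw [← hG] at hb
    exact hb
  -- summability of the geometric series of powers of E
  set r := Real.exp (-(ξ * α)) with hr
  have hr0 : 0 ≤ r := Real.exp_nonneg _
  have hr1 : r < 1 := by
    rw [hr, Real.exp_lt_one_iff]
    nlinarith
  have hentry_bound : ∀ k : ℕ, ∀ i j, (E ^ (k + 1)) i j ≤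
      ((m : ℝ) * (1 + ξ * K) ^ m) * (((k : ℝ) + 1) ^ m * r ^ (k + 1)) := by
    intro k i j
    have h1 : (E ^ (k + 1)) i j ≤ (Eα ^ (k + 1)) i j := pow_le' hEnn hEle (k + 1) i j
    have h2 := hEαpow (k + 1) i j
    have hcast : (((k + 1 : ℕ)) : ℝ) = (k : ℝ) + 1 := by push_cast; ring
    rw [hcast] at h2
    have h3 : Real.exp (-(((k : ℝ) + 1) * ξ * α)) = r ^ (k + 1) := by
      rw [hr, ← Real.exp_nat_mul]
      congr 1
      push_cast
      ring
    rw [h3] at h2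
    have h4 : (1 + ((k : ℝ) + 1) * ξ * K) ^ m ≤ ((k : ℝ) + 1) ^ m * (1 + ξ * K) ^ m := by
      rw [← mul_pow]
      have hk1 : (1 : ℝ) ≤ (k : ℝ) + 1 := by
        have : (0:ℝ) ≤ (k:ℝ) := Nat.cast_nonneg k
        linarith
      refine pow_le_pow_left₀ (by positivity) (by nlinarith) m
    have h5 : (Eα ^ (k + 1)) i j ≤
        r ^ (k + 1) * ((m : ℝ) * (((k : ℝ) + 1) ^ m * (1 + ξ * K) ^ m)) := by
      refine le_trans h2 ?_
      have hmn : (0:ℝ) ≤ (m : ℝ) := by positivity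
      have := mul_le_mul_of_nonneg_left h4 hmn
      have hrp : (0:ℝ) ≤ r ^ (k + 1) := by positivity
      nlinarith [pow_nonneg (by positivity : (0:ℝ) ≤ 1 + ((k:ℝ)+1) * ξ * K) m]
    refine le_trans h1 (le_trans h5 (le_of_eq ?_))
    ring
  have hsum_aux : Summable (fun k : ℕ => ((m : ℝ) * (1 + ξ * K) ^ m) *
      (((k : ℝ) + 1) ^ m * r ^ (k + 1))) := by
    refine Summable.mul_left _ ?_
    have h1 : Summable (fun n : ℕ => (n : ℝ) ^ m * r ^ n) := by
      refine summable_pow_mul_geometric_of_norm_lt_one m ?_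
      rw [Real.norm_eq_abs, abs_of_nonneg hr0]
      exact hr1
    have h2 := (summable_nat_add_iff 1).mpr h1
    refine h2.congr fun n => ?_
    push_cast
    ring
  have hentry_summ : ∀ i j, Summable (fun k : ℕ => (E ^ (k + 1)) i j) := by
    intro i j
    exact Summable.of_nonneg_of_le (fun k => pow_nonneg' hEnn (k + 1) i j)
      (fun k => hentry_bound k i j) hsum_aux
  have hfsumm : Summable (fun k : ℕ => E ^ (k + 1)) :=
    Pi.summable.mpr fun i => Pi.summable.mpr fun j => hentry_summ i j
  set S := ∑' k : ℕ, E ^ (k + 1) with hS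
  have hSsum : HasSum (fun k : ℕ => E ^ (k + 1)) S := hfsumm.hasSum
  have hSentry : ∀ i j, HasSum (fun k : ℕ => (E ^ (k + 1)) i j) (S i j) := by
    intro i j
    exact Pi.hasSum.mp (Pi.hasSum.mp hSsum i) j
  have hScorner : 0 < S ⟨m - 1, by omega⟩ ⟨0, by omega⟩ := by
    have h1 : (E ^ (0 + 1)) ⟨m - 1, by omega⟩ ⟨0, by omega⟩ ≤ S ⟨m - 1, by omega⟩ ⟨0, by omega⟩ :=
      le_hasSum (hSentry _ _) 0 (fun k _ => pow_nonneg' hEnn (k + 1) _ _)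
    rw [pow_one] at h1
    exact lt_of_lt_of_le hEcorner h1
  -- the inverse identities
  have hcomm : Commute (-(ξ • A)) (ξ • A) := (Commute.refl (ξ • A)).neg_left
  have hnegsmul : -ξ • A = -(ξ • A) := neg_smul ξ A
  have hinv1 : exp (-ξ • A) * E = 1 := by
    rw [hnegsmul, hE, ← Matrix.exp_add_of_commute _ _ hcomm, neg_add_cancel, exp_zero]
  have hinv2 : E * exp (-ξ • A) = 1 := by
    rw [hnegsmul, hE, ← Matrix.exp_add_of_commute _ _ hcomm.symm, add_neg_cancel, exp_zero]
  have haux1 : ∀ k : ℕ, exp (-ξ • A) * E ^ (k + 1) = E ^ k := by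
    intro k
    induction k with
    | zero => rw [pow_one, hinv1, pow_zero]
    | succ k ih =>
      rw [pow_succ, ← mul_assoc, ih, ← pow_succ]
  have haux2 : ∀ k : ℕ, E ^ (k + 1) * exp (-ξ • A) = E ^ k := by
    intro k
    induction k with
    | zero => rw [pow_one, hinv2, pow_zero]
    | succ k ih =>
      rw [pow_succ', mul_assoc, ih, ← pow_succ']
  set M := exp (-ξ • A) - 1 with hM
  have hEk1 : HasSum (fun k : ℕ => E ^ k) (S + 1) := by
    have h := (hasSum_nat_add_iff (f := fun k : ℕ => E ^ k) 1).mp hSsum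
    simpa using h
  have hMS : M * S = 1 := by
    have h2 : HasSum (fun k : ℕ => M * E ^ (k + 1)) (M * S) := hSsum.mul_left M
    have h3 : (fun k : ℕ => M * E ^ (k + 1)) = fun k : ℕ => E ^ k - E ^ (k + 1) := by
      funext k
      rw [hM, sub_mul, one_mul, haux1 k]
    rw [h3] at h2
    have h5 : HasSum (fun k : ℕ => E ^ k - E ^ (k + 1)) ((S + 1) - S) := hEk1.sub hSsum
    have h6 := h2.unique h5
    rw [h6]
    abel
  have hSM : S * M = 1 := by
    have h2 : HasSum (fun k : ℕ => E ^ (k + 1) * M) (S * M) := hSsum.mul_right M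
    have h3 : (fun k : ℕ => E ^ (k + 1) * M) = fun k : ℕ => E ^ k - E ^ (k + 1) := by
      funext k
      rw [hM, mul_sub, mul_one, haux2 k]
    rw [h3] at h2
    have h5 : HasSum (fun k : ℕ => E ^ k - E ^ (k + 1)) ((S + 1) - S) := hEk1.sub hSsum
    have h6 := h2.unique h5
    rw [h6]
    abel
  have hdet : IsUnit M.det := Matrix.isUnit_det_of_right_inverse hMS
  have hMinv : M⁻¹ = S := Matrix.inv_eq_right_inv hMS
  refine ⟨hdet, ?_⟩
  rw [igoφ, ← hA, ← hM, hMinv, dot_eval hm]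
  exact hScorner

/-! ### Continuity -/

theorem phi_eq (hm : 1 ≤ m) (a : Fin m → ℝ) (g : Fin (m - 1) → ℝ) (ξ : ℝ) :
    IgoAux.igoφ m a g ξ = ((exp (-ξ • igoA m a g) - 1)⁻¹ :
      Matrix (Fin m) (Fin m) ℝ) ⟨m - 1, by omega⟩ ⟨0, by omega⟩ :=
  dot_eval hm _

theorem exp_cont : Continuous (exp : Matrix (Fin m) (Fin m) ℝ → Matrix (Fin m) (Fin m) ℝ) := by
  letI : SeminormedRing (Matrix (Fin m) (Fin m) ℝ) := Matrix.linftyOpSemiNormedRing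
  letI : NormedRing (Matrix (Fin m) (Fin m) ℝ) := Matrix.linftyOpNormedRing
  letI : NormedAlgebra ℝ (Matrix (Fin m) (Fin m) ℝ) := Matrix.linftyOpNormedAlgebra
  exact open scoped Norms.Operator in exp_continuous

theorem phi_contAt (hm : 1 ≤ m) (a : Fin m → ℝ) (g : Fin (m - 1) → ℝ) (ξ : ℝ)
    (hdet : IsUnit (exp (-ξ • igoA m a g) - 1).det) :
    ContinuousAt (IgoAux.igoφ m a g) ξ := by
  have hMcont : Continuous (fun t : ℝ => exp (-t • igoA m a g) - 1) := by
    refine Continuous.sub ?_ continuous_const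
    exact exp_cont.comp ((continuous_neg.comp continuous_id).smul continuous_const)
  have hinvca : ContinuousAt (fun t : ℝ => (exp (-t • igoA m a g) - 1)⁻¹) ξ := by
    refine ContinuousAt.comp (continuousAt_matrix_inv _ ?_) hMcont.continuousAt
    rw [Ring.inverse_eq_inv']
    exact continuousAt_inv₀ hdet.ne_zero
  have heq : IgoAux.igoφ m a g = fun t : ℝ =>
      ((exp (-t • igoA m a g) - 1)⁻¹ : Matrix (Fin m) (Fin m) ℝ)
        ⟨m - 1, by omega⟩ ⟨0, by omega⟩ := funext fun t => phi_eq hm a g t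
  rw [heq]
  exact ContinuousAt.comp (Continuous.continuousAt (continuous_apply_apply _ _)) hinvca

end IgoAux

theorem stmt4 (m : ℕ) (hm : 1 ≤ m) (a : Fin m → ℝ) (g : Fin (m - 1) → ℝ)
    (ha : ∀ i, 0 < a i) (hg : ∀ i, 0 < g i)
    (Φ F : ℝ → ℝ) (hΦcont : ContinuousOn Φ (Set.Ici 0)) (hFcont : ContinuousOn F (Set.Ici 0))
    (Φ₁ Φ₂ F₁ F₂ : ℝ) (hΦ₁ : 0 < Φ₁) (hΦ₂ : 0 < Φ₂) (hF₁ : 0 < F₁) (hF₂ : 0 < F₂)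
    (hΦ : ∀ y ≥ (0 : ℝ), Φ₁ ≤ Φ y ∧ Φ y ≤ Φ₂)
    (hF : ∀ y ≥ (0 : ℝ), F₁ ≤ F y ∧ F y ≤ F₂) :
    ∃ c₁ c₂ : ℝ, 0 < c₁ ∧ c₁ ≤ c₂ ∧
      ∀ y ≥ (0 : ℝ), c₁ ≤ igoR m a g Φ F y ∧ igoR m a g Φ F y ≤ c₂ := by
  have hkey := fun (ξ : ℝ) (hξ : 0 < ξ) => IgoAux.key hm a g ha hg ξ hξ
  have hΦ12 : Φ₁ ≤ Φ₂ := le_trans (hΦ 0 le_rfl).1 (hΦ 0 le_rfl).2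
  have hF12 : F₁ ≤ F₂ := le_trans (hF 0 le_rfl).1 (hF 0 le_rfl).2
  have hpos : ∀ ξ ∈ Set.Icc Φ₁ Φ₂, 0 < ξ := fun ξ hξ => lt_of_lt_of_le hΦ₁ hξ.1
  have hφcont : ContinuousOn (IgoAux.igoφ m a g) (Set.Icc Φ₁ Φ₂) := by
    intro ξ hξ
    exact (IgoAux.phi_contAt hm a g ξ (hkey ξ (hpos ξ hξ)).1).continuousWithinAt
  obtain ⟨ξ₁, hξ₁mem, hmin⟩ := isCompact_Icc.exists_isMinOn
    (Set.nonempty_Icc.mpr hΦ12) hφcont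
  obtain ⟨ξ₂, hξ₂mem, hmax⟩ := isCompact_Icc.exists_isMaxOn
    (Set.nonempty_Icc.mpr hΦ12) hφcont
  have hd₁ : 0 < IgoAux.igoφ m a g ξ₁ := (hkey ξ₁ (hpos ξ₁ hξ₁mem)).2
  have hd₂ : 0 < IgoAux.igoφ m a g ξ₂ := (hkey ξ₂ (hpos ξ₂ hξ₂mem)).2
  have hd12 : IgoAux.igoφ m a g ξ₁ ≤ IgoAux.igoφ m a g ξ₂ := hmin hξ₂mem
  refine ⟨F₁ * IgoAux.igoφ m a g ξ₁, F₂ * IgoAux.igoφ m a g ξ₂, by positivity, ?_, ?_⟩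
  · exact mul_le_mul hF12 hd12 hd₁.le hF₂.le
  · intro y hy
    have hΦy := hΦ y hy
    have hFy := hF y hy
    have hmem : Φ y ∈ Set.Icc Φ₁ Φ₂ := ⟨hΦy.1, hΦy.2⟩
    have hφy : 0 < IgoAux.igoφ m a g (Φ y) := (hkey (Φ y) (hpos _ hmem)).2
    have hR : igoR m a g Φ F y = F y * IgoAux.igoφ m a g (Φ y) := rfl
    constructor
    · rw [hR]
      exact mul_le_mul hFy.1 (hmin hmem) hd₁.le (le_trans hF₁.le hFy.1)
    · rw [hR]
      exact mul_le_mul hFy.2 (hmax hmem) hφy.le hF₂.le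
end

section
/- The equation of periods y = R(y) has at least one solution y ∈ [0,∞), and every solution is strictly positive. -/
open Matrix NormedSpace

section IgoAux

attribute [local instance] Matrix.linftyOpNormedAddCommGroup Matrix.linftyOpNormedRing
  Matrix.linftyOpNormedAlgebra

variable {m : ℕ}

lemma igoA_offdiag_eq (a : Fin m → ℝ) (g : Fin (m - 1) → ℝ) {i j : Fin m} (h : i ≠ j) :
    igoA m a g i j = if h : (i : ℕ) = (j : ℕ) + 1 then g ⟨(j : ℕ), by have := i.isLt; omega⟩
      else 0 := by simp [igoA, h]

lemma igoA_sub (a : Fin m → ℝ) (g : Fin (m - 1) → ℝ) (j : ℕ) (hj : j + 1 < m) :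
    igoA m a g ⟨j + 1, hj⟩ ⟨j, by omega⟩ = g ⟨j, by omega⟩ := by
  have h1 : (⟨j + 1, hj⟩ : Fin m) ≠ ⟨j, by omega⟩ := by
    simp [Fin.ext_iff]
  rw [igoA_offdiag_eq _ _ h1]
  simp

/-- entry (i+1, i) of a matrix, as a function of `ℕ`. -/
noncomputable def igoNf (N : Matrix (Fin m) (Fin m) ℝ) (i : ℕ) : ℝ :=
  if h : i + 1 < m then N ⟨i + 1, h⟩ ⟨i, by omega⟩ else 0

lemma mul_entry_nonneg {X Y : Matrix (Fin m) (Fin m) ℝ} (hX : ∀ i j, 0 ≤ X i j)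
    (hY : ∀ i j, 0 ≤ Y i j) : ∀ i j, 0 ≤ (X * Y) i j := by
  intro i j
  rw [Matrix.mul_apply]
  exact Finset.sum_nonneg fun k _ => mul_nonneg (hX i k) (hY k j)

lemma pow_entry_nonneg {X : Matrix (Fin m) (Fin m) ℝ} (hX : ∀ i j, 0 ≤ X i j) (n : ℕ) :
    ∀ i j, 0 ≤ (X ^ n) i j := by
  induction n with
  | zero => intro i j; rw [pow_zero]; by_cases h : i = j <;> simp [Matrix.one_apply, h]
  | succ n ih => rw [pow_succ]; exact mul_entry_nonneg ih hX

lemma chain_entry {N : Matrix (Fin m) (Fin m) ℝ} (hN : ∀ i j, 0 ≤ N i j) :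
    ∀ k, ∀ hk : k < m,
      (∏ i ∈ Finset.range k, igoNf N i) ≤ (N ^ k) ⟨k, hk⟩ ⟨0, by omega⟩ := by
  intro k
  induction k with
  | zero =>
    intro hk
    simp [Matrix.one_apply]
  | succ k ih =>
    intro hk
    have hk' : k < m := by omega
    have h1 : (N ^ (k + 1)) ⟨k + 1, hk⟩ ⟨0, by omega⟩
        = ∑ j, N ⟨k + 1, hk⟩ j * (N ^ k) j ⟨0, by omega⟩ := by
      rw [pow_succ', Matrix.mul_apply]
    have h2 : N ⟨k + 1, hk⟩ ⟨k, hk'⟩ * (N ^ k) ⟨k, hk'⟩ ⟨0, by omega⟩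
        ≤ ∑ j, N ⟨k + 1, hk⟩ j * (N ^ k) j ⟨0, by omega⟩ := by
      exact Finset.single_le_sum
        (fun j _ => mul_nonneg (hN _ j) (pow_entry_nonneg hN k j _)) (Finset.mem_univ _)
    rw [h1, Finset.prod_range_succ]
    have h3 : igoNf N k = N ⟨k + 1, hk⟩ ⟨k, hk'⟩ := by rw [igoNf, dif_pos hk]
    calc (∏ i ∈ Finset.range k, igoNf N i) * igoNf N k
        ≤ (N ^ k) ⟨k, hk'⟩ ⟨0, by omega⟩ * igoNf N k := by
          apply mul_le_mul_of_nonneg_right (ih hk')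
          rw [h3]; exact hN _ _
      _ = N ⟨k + 1, hk⟩ ⟨k, hk'⟩ * (N ^ k) ⟨k, hk'⟩ ⟨0, by omega⟩ := by rw [h3]; ring
      _ ≤ _ := h2

lemma entry_hasSum {f : ℕ → Matrix (Fin m) (Fin m) ℝ} {X : Matrix (Fin m) (Fin m) ℝ}
    (h : HasSum f X) (i j : Fin m) : HasSum (fun n => f n i j) (X i j) := by
  have : Continuous fun Y : Matrix (Fin m) (Fin m) ℝ => Y i j := continuous_id.matrix_elem i j
  exact h.map (AddMonoidHom.mk' (fun Y : Matrix (Fin m) (Fin m) ℝ => Y i j) (fun _ _ => rfl)) this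

lemma exp_entry_hasSum (X : Matrix (Fin m) (Fin m) ℝ) (i j : Fin m) :
    HasSum (fun n => ((n.factorial : ℝ))⁻¹ * (X ^ n) i j) (exp X i j) := by
  have h := exp_series_hasSum_exp' (𝕂 := ℝ) X
  have h2 := entry_hasSum h i j
  simp only [Matrix.smul_apply, smul_eq_mul] at h2
  exact h2

lemma exp_entry_nonneg {X : Matrix (Fin m) (Fin m) ℝ} (hX : ∀ i j, 0 ≤ X i j) (i j : Fin m) :
    0 ≤ exp X i j :=
  hasSum_le (fun n => mul_nonneg (by positivity) (pow_entry_nonneg hX n i j)) hasSum_zero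
    (exp_entry_hasSum X i j)

lemma exp_entry_ge_term {X : Matrix (Fin m) (Fin m) ℝ} (hX : ∀ i j, 0 ≤ X i j) (i j : Fin m)
    (k : ℕ) : ((k.factorial : ℝ))⁻¹ * (X ^ k) i j ≤ exp X i j :=
  le_hasSum (exp_entry_hasSum X i j) k
    (fun n _ => mul_nonneg (by positivity) (pow_entry_nonneg hX n i j))

lemma exp_smul_one (c : ℝ) :
    exp (c • (1 : Matrix (Fin m) (Fin m) ℝ)) = Real.exp c • 1 := by
  rw [Matrix.smul_one_eq_diagonal, Matrix.exp_diagonal, Matrix.smul_one_eq_diagonal]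
  ext i
  rw [Pi.exp_def, Real.exp_eq_exp_ℝ]

section shift

variable (a : Fin m → ℝ) (g : Fin (m - 1) → ℝ)

/-- The shifted matrix `A + c•1` with `c = ∑ |a i|`, which is entrywise nonnegative. -/
noncomputable def igoN : Matrix (Fin m) (Fin m) ℝ :=
  igoA m a g + (∑ i, |a i|) • 1

lemma igoN_nonneg (hg : ∀ i, 0 ≤ g i) : ∀ i j, 0 ≤ igoN a g i j := by
  intro i j
  rw [igoN, Matrix.add_apply, Matrix.smul_apply, smul_eq_mul]
  by_cases h : i = j
  · subst h
    rw [Matrix.one_apply_eq, mul_one]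
    have hd : igoA m a g i i = -a i := by simp [igoA]
    rw [hd]
    have h1 : a i ≤ ∑ k, |a k| :=
      le_trans (le_abs_self _) (Finset.single_le_sum (fun k _ => abs_nonneg (a k))
        (Finset.mem_univ i))
    linarith
  · rw [Matrix.one_apply_ne h, mul_zero, add_zero, igoA_offdiag_eq a g h]
    split_ifs with h2
    · exact hg _
    · exact le_refl 0

lemma exp_igoA_eq (hg : ∀ i, 0 ≤ g i) :
    exp (igoA m a g) = Real.exp (-(∑ i, |a i|)) • exp (igoN a g) := by
  have hdec : igoA m a g = (-(∑ i, |a i|)) • (1 : Matrix (Fin m) (Fin m) ℝ) + igoN a g := by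
    rw [igoN, neg_smul]; abel
  have hcomm : Commute ((-(∑ i, |a i|)) • (1 : Matrix (Fin m) (Fin m) ℝ)) (igoN a g) :=
    (Commute.one_left (igoN a g)).smul_left _
  rw [hdec, Matrix.exp_add_of_commute _ _ hcomm, exp_smul_one, Matrix.smul_mul, Matrix.one_mul]

lemma exp_igoA_nonneg (hg : ∀ i, 0 ≤ g i) (i j : Fin m) : 0 ≤ exp (igoA m a g) i j := by
  rw [exp_igoA_eq a g hg, Matrix.smul_apply, smul_eq_mul]
  exact mul_nonneg (Real.exp_pos _).le (exp_entry_nonneg (igoN_nonneg a g hg) i j)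

lemma exp_igoA_corner (hm : 1 ≤ m) (hg : ∀ i, 0 < g i) :
    0 < exp (igoA m a g) ⟨m - 1, by omega⟩ ⟨0, by omega⟩ := by
  have hg' : ∀ i, 0 ≤ g i := fun i => (hg i).le
  rw [exp_igoA_eq a g hg', Matrix.smul_apply, smul_eq_mul]
  apply mul_pos (Real.exp_pos _)
  have hN := igoN_nonneg a g hg'
  have hchain := chain_entry hN (m - 1) (by omega)
  have hprod : 0 < ∏ i ∈ Finset.range (m - 1), igoNf (igoN a g) i := by
    apply Finset.prod_pos
    intro i hi
    rw [Finset.mem_range] at hi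
    have hi1 : i + 1 < m := by omega
    rw [igoNf, dif_pos hi1, igoN, Matrix.add_apply, Matrix.smul_apply, smul_eq_mul,
      Matrix.one_apply_ne (by simp [Fin.ext_iff]), mul_zero, add_zero, igoA_sub a g i hi1]
    exact hg _
  have h1 : 0 < (((m - 1).factorial : ℝ))⁻¹ *
      (igoN a g ^ (m - 1)) ⟨m - 1, by omega⟩ ⟨0, by omega⟩ := by
    apply mul_pos (by positivity)
    exact lt_of_lt_of_le hprod hchain
  exact lt_of_lt_of_le h1 (exp_entry_ge_term hN _ _ _)


lemma igoA_smul (c : ℝ) (a : Fin m → ℝ) (g : Fin (m - 1) → ℝ) :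
    c • igoA m a g = igoA m (fun i => c * a i) (fun i => c * g i) := by
  ext i j
  simp only [Matrix.smul_apply, igoA, smul_eq_mul]
  split_ifs <;> ring

lemma igoA_zero_g (a : Fin m → ℝ) :
    igoA m a (fun _ => 0) = Matrix.diagonal (fun i => -a i) := by
  ext i j
  simp only [igoA, Matrix.diagonal_apply]
  split_ifs <;> rfl

lemma igoA_cont (a : Fin m → ℝ) (g : Fin (m - 1) → ℝ) :
    Continuous fun ε : ℝ => igoA m a (fun i => ε * g i) := by
  apply continuous_matrix
  intro i j
  by_cases h1 : i = j
  · simp only [igoA, if_pos h1]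
    exact continuous_const
  · by_cases h2 : (i : ℕ) = (j : ℕ) + 1
    · simp only [igoA, if_neg h1, dif_pos h2]
      exact (continuous_id.mul continuous_const)
    · simp only [igoA, if_neg h1, dif_neg h2]
      exact continuous_const

lemma norm_exp_diag_lt_one {ξ : ℝ} (hξ : 0 < ξ) (a : Fin m → ℝ) (ha : ∀ i, 0 < a i) :
    ‖exp (igoA m (fun i => ξ * a i) (fun _ : Fin (m - 1) => 0))‖ < 1 := by
  rw [igoA_zero_g, Matrix.exp_diagonal, Matrix.linfty_opNorm_diagonal]
  rw [pi_norm_lt_iff one_pos]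
  intro i
  rw [Pi.exp_def, ← Real.exp_eq_exp_ℝ, Real.norm_eq_abs, Real.abs_exp, Real.exp_lt_one_iff]
  have := ha i
  nlinarith

lemma igo_key (hm : 1 ≤ m) (a : Fin m → ℝ) (g : Fin (m - 1) → ℝ)
    (ha : ∀ i, 0 < a i) (hg : ∀ i, 0 < g i) {ξ : ℝ} (hξ : 0 < ξ) :
    IsUnit (exp (-ξ • igoA m a g) - 1 : Matrix (Fin m) (Fin m) ℝ).det ∧
      0 < ((exp (-ξ • igoA m a g) - 1)⁻¹ : Matrix (Fin m) (Fin m) ℝ)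
        ⟨m - 1, by omega⟩ ⟨0, by omega⟩ := by
  -- continuity in ε of the norm of exp of the scaled matrix
  have hPcont : Continuous fun ε : ℝ =>
      ‖exp (igoA m (fun i => ξ * a i) (fun i => ε * (ξ * g i)))‖ :=
    (exp_continuous.comp (igoA_cont (fun i => ξ * a i) (fun i => ξ * g i))).norm
  have h0 : ‖exp (igoA m (fun i => ξ * a i) (fun i => (0:ℝ) * (ξ * g i)))‖ < 1 := by
    have : (fun i : Fin (m-1) => (0:ℝ) * (ξ * g i)) = fun _ => (0:ℝ) := by
      funext i; ring
    rw [this]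
    exact norm_exp_diag_lt_one hξ a ha
  have hev : ∀ᶠ ε in nhdsWithin (0:ℝ) (Set.Ioi 0),
      ‖exp (igoA m (fun i => ξ * a i) (fun i => ε * (ξ * g i)))‖ < 1 :=
    ((hPcont.tendsto 0).eventually_lt_const h0).filter_mono nhdsWithin_le_nhds
  obtain ⟨ε, hε1, hε0⟩ := (hev.and eventually_mem_nhdsWithin).exists
  rw [Set.mem_Ioi] at hε0
  -- set up the conjugated matrix
  set Aε : Matrix (Fin m) (Fin m) ℝ := igoA m a (fun i => ε * g i) with hAε
  have hgfun : (fun i : Fin (m-1) => ξ * (ε * g i)) = (fun i => ε * (ξ * g i)) :=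
    funext fun i => by ring
  have hsmul : ξ • Aε = igoA m (fun i => ξ * a i) (fun i => ε * (ξ * g i)) := by
    rw [hAε, igoA_smul, hgfun]
  set P : Matrix (Fin m) (Fin m) ℝ := exp (ξ • Aε) with hPdef
  have hP1 : ‖P‖ < 1 := by rw [hPdef, hsmul]; exact hε1
  have hPnn : ∀ i j, 0 ≤ P i j := by
    rw [hPdef, hsmul]
    exact exp_igoA_nonneg _ _ (fun i => by have := hg i; positivity)
  have hPcorner : 0 < P ⟨m - 1, by omega⟩ ⟨0, by omega⟩ := by
    rw [hPdef, hsmul]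
    exact exp_igoA_corner _ _ hm (fun i => by have := hg i; positivity)
  -- the geometric series
  set T : Matrix (Fin m) (Fin m) ℝ := ∑' n : ℕ, P ^ n with hTdef
  have hTsum : HasSum (fun n : ℕ => P ^ n) T := (summable_geometric_of_norm_lt_one hP1).hasSum
  have hTnn : ∀ i j, 0 ≤ T i j := fun i j =>
    hasSum_le (fun n => pow_entry_nonneg hPnn n i j) hasSum_zero (entry_hasSum hTsum i j)
  have hTdiag : (1:ℝ) ≤ T ⟨m - 1, by omega⟩ ⟨m - 1, by omega⟩ := by
    have h := le_hasSum (entry_hasSum hTsum ⟨m - 1, by omega⟩ ⟨m - 1, by omega⟩) 0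
      (fun n _ => pow_entry_nonneg hPnn n _ _)
    simpa [Matrix.one_apply] using h
  have hgeom : (1 - P) * T = 1 := mul_neg_geom_series P hP1
  -- inverse of exp
  have hcomm : Commute (-ξ • Aε) (ξ • Aε) := ((Commute.refl Aε).smul_left (-ξ)).smul_right ξ
  have hexpinv : exp (-ξ • Aε) * P = 1 := by
    rw [hPdef, ← Matrix.exp_add_of_commute _ _ hcomm]
    have : -ξ • Aε + ξ • Aε = 0 := by module
    rw [this, exp_zero]
  set Mε : Matrix (Fin m) (Fin m) ℝ := exp (-ξ • Aε) - 1 with hMεdef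
  have hMεeq : Mε = exp (-ξ • Aε) * (1 - P) := by
    rw [hMεdef, mul_sub, mul_one, hexpinv]
  set S : Matrix (Fin m) (Fin m) ℝ := T * P with hSdef
  have hMεS : Mε * S = 1 := by
    rw [hMεeq, hSdef, mul_assoc, ← mul_assoc (1 - P), hgeom, one_mul, hexpinv]
  -- the diagonal conjugation
  set U : Matrix (Fin m) (Fin m) ℝ := Matrix.diagonal (fun i : Fin m => ε ^ (i:ℕ)) with hUdef
  set V : Matrix (Fin m) (Fin m) ℝ := Matrix.diagonal (fun i : Fin m => (ε ^ (i:ℕ))⁻¹) with hVdef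
  have hUV : U * V = 1 := by
    rw [hUdef, hVdef, Matrix.diagonal_mul_diagonal]
    rw [show (fun i : Fin m => ε ^ (i:ℕ) * (ε ^ (i:ℕ))⁻¹) = fun _ => (1:ℝ) from
      funext fun i => mul_inv_cancel₀ (pow_ne_zero _ hε0.ne')]
    exact Matrix.diagonal_one
  have hVU : V * U = 1 := by
    rw [hUdef, hVdef, Matrix.diagonal_mul_diagonal]
    rw [show (fun i : Fin m => (ε ^ (i:ℕ))⁻¹ * ε ^ (i:ℕ)) = fun _ => (1:ℝ) from
      funext fun i => inv_mul_cancel₀ (pow_ne_zero _ hε0.ne')]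
    exact Matrix.diagonal_one
  have hUunit : IsUnit U := by
    rw [Matrix.isUnit_iff_isUnit_det]
    exact Matrix.isUnit_det_of_right_inverse hUV
  have hUinv : U⁻¹ = V := Matrix.inv_eq_right_inv hUV
  have hconj : Aε = U * igoA m a g * V := by
    ext i j
    have hUAV : (U * igoA m a g * V) i j = ε ^ (i:ℕ) * igoA m a g i j * (ε ^ (j:ℕ))⁻¹ := by
      rw [Matrix.mul_diagonal, Matrix.diagonal_mul]
    rw [hUAV]
    by_cases h1 : i = j
    · subst h1
      have hd : igoA m a g i i = -a i := by simp [igoA]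
      have hd' : Aε i i = -a i := by rw [hAε]; simp [igoA]
      rw [hd, hd']
      field_simp
    · by_cases h2 : (i : ℕ) = (j : ℕ) + 1
      · rw [hAε, igoA_offdiag_eq _ _ h1, igoA_offdiag_eq a g h1, dif_pos h2, dif_pos h2]
        have hpow : ε ^ (i : ℕ) = ε ^ (j : ℕ) * ε := by rw [h2, pow_succ]
        have hne : (ε : ℝ) ^ (j : ℕ) ≠ 0 := pow_ne_zero _ hε0.ne'
        rw [hpow]
        field_simp
      · rw [hAε, igoA_offdiag_eq _ _ h1, igoA_offdiag_eq a g h1, dif_neg h2, dif_neg h2,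
          mul_zero, zero_mul]
  -- conjugate everything back
  have hsmulconj : -ξ • Aε = U * (-ξ • igoA m a g) * V := by
    rw [hconj, Matrix.mul_smul, Matrix.smul_mul]
  have hexpconj : exp (-ξ • Aε) = U * exp (-ξ • igoA m a g) * V := by
    rw [hsmulconj, ← hUinv, Matrix.exp_conj _ _ hUunit, hUinv]
  set M : Matrix (Fin m) (Fin m) ℝ := exp (-ξ • igoA m a g) - 1 with hMdef
  have hMconj : Mε = U * M * V := by
    have h9 : U * M * V = U * exp (-ξ • igoA m a g) * V - U * V := by
      rw [hMdef]; noncomm_ring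
    rw [h9, hUV, ← hexpconj, hMεdef]
  have hM' : M = V * Mε * U := by
    rw [hMconj]
    have h9 : V * (U * M * V) * U = V * U * M * (V * U) := by noncomm_ring
    rw [h9, hVU, one_mul, mul_one]
  have hMS : M * (V * S * U) = 1 := by
    rw [hM']
    have h9 : V * Mε * U * (V * S * U) = V * (Mε * (U * V * S)) * U := by noncomm_ring
    rw [h9, hUV, one_mul, hMεS, mul_one, hVU]
  refine ⟨Matrix.isUnit_det_of_right_inverse hMS, ?_⟩
  rw [Matrix.inv_eq_right_inv hMS]
  have hSpos : 0 < S ⟨m - 1, by omega⟩ ⟨0, by omega⟩ := by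
    have hterm : (1:ℝ) * P ⟨m - 1, by omega⟩ ⟨0, by omega⟩
        ≤ T ⟨m - 1, by omega⟩ ⟨m - 1, by omega⟩ * P ⟨m - 1, by omega⟩ ⟨0, by omega⟩ :=
      mul_le_mul_of_nonneg_right hTdiag (hPnn _ _)
    have hsingle : T ⟨m - 1, by omega⟩ ⟨m - 1, by omega⟩ * P ⟨m - 1, by omega⟩ ⟨0, by omega⟩
        ≤ ∑ j, T ⟨m - 1, by omega⟩ j * P j ⟨0, by omega⟩ :=
      Finset.single_le_sum (f := fun j => T ⟨m - 1, by omega⟩ j * P j ⟨0, by omega⟩)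
        (fun j _ => mul_nonneg (hTnn _ j) (hPnn j _)) (Finset.mem_univ (⟨m - 1, by omega⟩ : Fin m))
    have : 0 < (1:ℝ) * P ⟨m - 1, by omega⟩ ⟨0, by omega⟩ := by
      rw [one_mul]; exact hPcorner
    calc (0:ℝ) < (1:ℝ) * P ⟨m - 1, by omega⟩ ⟨0, by omega⟩ := this
      _ ≤ _ := le_trans hterm hsingle
      _ = S ⟨m - 1, by omega⟩ ⟨0, by omega⟩ := by rw [hSdef, Matrix.mul_apply]
  have hentry : (V * S * U) ⟨m - 1, by omega⟩ ⟨0, by omega⟩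
      = (ε ^ (m - 1))⁻¹ * S ⟨m - 1, by omega⟩ ⟨0, by omega⟩ * ε ^ 0 := by
    rw [hUdef, hVdef, Matrix.mul_diagonal, Matrix.diagonal_mul]
  rw [hentry]
  have h1 : (0:ℝ) < (ε ^ (m - 1))⁻¹ := inv_pos.mpr (pow_pos hε0 _)
  have h2 : (0:ℝ) < ε ^ 0 := pow_pos hε0 0
  exact mul_pos (mul_pos h1 hSpos) h2
end shift

end IgoAux

variable {m : ℕ}

lemma igo_dot (hm : 1 ≤ m) (X : Matrix (Fin m) (Fin m) ℝ) :
    igoC m ⬝ᵥ X.mulVec (igoB m) = X ⟨m - 1, by omega⟩ ⟨0, by omega⟩ := by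
  have hmv : ∀ i, X.mulVec (igoB m) i = X i ⟨0, by omega⟩ := by
    intro i
    rw [Matrix.mulVec, dotProduct]
    rw [Finset.sum_eq_single (⟨0, by omega⟩ : Fin m)]
    · rw [igoB]; norm_num
    · intro b _ hb
      have hb' : (b : ℕ) ≠ 0 := fun h => hb (Fin.ext h)
      rw [igoB]; simp [hb']
    · intro h; exact absurd (Finset.mem_univ _) h
  rw [dotProduct]
  rw [Finset.sum_eq_single (⟨m - 1, by omega⟩ : Fin m)]
  · rw [hmv, igoC]; norm_num
  · intro b _ hb
    have hb' : (b : ℕ) ≠ m - 1 := fun h => hb (Fin.ext h)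
    rw [igoC]; simp [hb']
  · intro h; exact absurd (Finset.mem_univ _) h


section IgoAux2

attribute [local instance] Matrix.linftyOpNormedAddCommGroup Matrix.linftyOpNormedRing
  Matrix.linftyOpNormedAlgebra

lemma igoM_cont (a : Fin m → ℝ) (g : Fin (m - 1) → ℝ) :
    Continuous fun t : ℝ => (exp (-t • igoA m a g) - 1 : Matrix (Fin m) (Fin m) ℝ) :=
  (exp_continuous.comp (continuous_neg.smul continuous_const)).sub continuous_const

end IgoAux2

lemma igoM_cont' (a : Fin m → ℝ) (g : Fin (m - 1) → ℝ) :
    Continuous fun t : ℝ => (exp (-t • igoA m a g) - 1 : Matrix (Fin m) (Fin m) ℝ) :=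
  igoM_cont a g

lemma igo_key' {m : ℕ} (hm : 1 ≤ m) (a : Fin m → ℝ) (g : Fin (m - 1) → ℝ)
    (ha : ∀ i, 0 < a i) (hg : ∀ i, 0 < g i) {ξ : ℝ} (hξ : 0 < ξ) :
    IsUnit (exp (-ξ • igoA m a g) - 1 : Matrix (Fin m) (Fin m) ℝ).det ∧
      0 < ((exp (-ξ • igoA m a g) - 1)⁻¹ : Matrix (Fin m) (Fin m) ℝ)
        ⟨m - 1, by omega⟩ ⟨0, by omega⟩ :=
  igo_key hm a g ha hg hξ


theorem stmt5 (m : ℕ) (hm : 1 ≤ m) (a : Fin m → ℝ) (g : Fin (m - 1) → ℝ)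
    (ha : ∀ i, 0 < a i) (hg : ∀ i, 0 < g i)
    (Φ F : ℝ → ℝ) (hΦcont : ContinuousOn Φ (Set.Ici 0)) (hFcont : ContinuousOn F (Set.Ici 0))
    (Φ₁ Φ₂ F₁ F₂ : ℝ) (hΦ₁ : 0 < Φ₁) (hΦ₂ : 0 < Φ₂) (hF₁ : 0 < F₁) (hF₂ : 0 < F₂)
    (hΦ : ∀ y ≥ (0 : ℝ), Φ₁ ≤ Φ y ∧ Φ y ≤ Φ₂)
    (hF : ∀ y ≥ (0 : ℝ), F₁ ≤ F y ∧ F y ≤ F₂) :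
    (∃ y ≥ (0 : ℝ), y = igoR m a g Φ F y) ∧
    (∀ y ≥ (0 : ℝ), y = igoR m a g Φ F y → 0 < y) := by
  have hΦ₁₂ : Φ₁ ≤ Φ₂ := le_trans (hΦ 0 le_rfl).1 (hΦ 0 le_rfl).2
  set q : ℝ → ℝ := fun ξ => ((exp (-ξ • igoA m a g) - 1)⁻¹ : Matrix (Fin m) (Fin m) ℝ)
      ⟨m - 1, by omega⟩ ⟨0, by omega⟩ with hq
  have hR : ∀ y, igoR m a g Φ F y = F y * q (Φ y) := by
    intro y
    simp only [igoR, hq]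
    rw [igo_dot hm]
  have hqpos : ∀ ξ : ℝ, 0 < ξ → 0 < q ξ := fun ξ hξ => (igo_key' hm a g ha hg hξ).2
  have hqcont : ∀ ξ : ℝ, 0 < ξ → ContinuousAt q ξ := by
    intro ξ hξ
    have hdet : (exp (-ξ • igoA m a g) - 1 : Matrix (Fin m) (Fin m) ℝ).det ≠ 0 :=
      (igo_key' hm a g ha hg hξ).1.ne_zero
    have hMc := igoM_cont' a g
    have hq' : q = fun t : ℝ =>
        ((exp (-t • igoA m a g) - 1 : Matrix (Fin m) (Fin m) ℝ).det)⁻¹ *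
          (exp (-t • igoA m a g) - 1 : Matrix (Fin m) (Fin m) ℝ).adjugate
            ⟨m - 1, by omega⟩ ⟨0, by omega⟩ := by
      funext t
      simp only [hq]
      rw [Matrix.inv_def, Matrix.smul_apply, smul_eq_mul, Ring.inverse_eq_inv']
    rw [hq']
    exact ((hMc.matrix_det.continuousAt).inv₀ hdet).mul
      ((hMc.matrix_adjugate.matrix_elem _ _).continuousAt)
  have hRcont : ContinuousOn (igoR m a g Φ F) (Set.Ici 0) := by
    have h1 : ContinuousOn (fun y => F y * q (Φ y)) (Set.Ici 0) := by
      apply hFcont.mul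
      intro y hy
      exact (hqcont (Φ y) (lt_of_lt_of_le hΦ₁ (hΦ y hy).1)).comp_continuousWithinAt
        (hΦcont y hy)
    exact h1.congr fun y hy => hR y
  obtain ⟨ξm, hmem, hKmax'⟩ := isCompact_Icc.exists_isMaxOn (⟨Φ₁, le_rfl, hΦ₁₂⟩ :
      (Set.Icc Φ₁ Φ₂).Nonempty)
    (fun ξ hξ => (hqcont ξ (lt_of_lt_of_le hΦ₁ hξ.1)).continuousWithinAt :
      ContinuousOn q (Set.Icc Φ₁ Φ₂))
  have hKmax : ∀ ξ' ∈ Set.Icc Φ₁ Φ₂, q ξ' ≤ q ξm := fun ξ' h => hKmax' h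
  set K := q ξm with hKdef
  have hK0 : 0 < K := hqpos _ (lt_of_lt_of_le hΦ₁ hmem.1)
  have hbound : ∀ y ≥ (0:ℝ), igoR m a g Φ F y ≤ F₂ * K := by
    intro y hy
    rw [hR y]
    have h1 : q (Φ y) ≤ K := hKmax _ ⟨(hΦ y hy).1, (hΦ y hy).2⟩
    have h2 : 0 < q (Φ y) := hqpos _ (lt_of_lt_of_le hΦ₁ (hΦ y hy).1)
    have h3 := hF y hy
    nlinarith
  set Y : ℝ := F₂ * K + 1 with hYdef
  have hY0 : (0:ℝ) ≤ Y := by nlinarith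
  have hcont2 : ContinuousOn (fun y => igoR m a g Φ F y - y) (Set.Icc 0 Y) :=
    (hRcont.mono Set.Icc_subset_Ici_self).sub continuousOn_id
  have hsign0 : 0 ≤ igoR m a g Φ F 0 - 0 := by
    rw [hR 0, sub_zero]
    exact (mul_pos (lt_of_lt_of_le hF₁ (hF 0 le_rfl).1)
      (hqpos _ (lt_of_lt_of_le hΦ₁ (hΦ 0 le_rfl).1))).le
  have hsignY : igoR m a g Φ F Y - Y ≤ 0 := by
    have := hbound Y hY0
    rw [hYdef] at *
    linarith
  have hsub := intermediate_value_Icc' hY0 hcont2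
  have h0mem : (0:ℝ) ∈ Set.Icc (igoR m a g Φ F Y - Y) (igoR m a g Φ F 0 - 0) :=
    ⟨hsignY, hsign0⟩
  obtain ⟨y, hy, hfy⟩ := hsub h0mem
  constructor
  · refine ⟨y, hy.1, ?_⟩
    have h2 : igoR m a g Φ F y - y = 0 := hfy
    linarith
  · intro y hy heq
    rw [heq, hR y]
    exact mul_pos (lt_of_lt_of_le hF₁ (hF y hy).1)
      (hqpos _ (lt_of_lt_of_le hΦ₁ (hΦ y hy).1))
end
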